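/- Let (X, d) be a metric space, μ a Borel measure on X, q ∈ X, C > 0 and r > 0. Suppose that every 1-Lipschitz function f : X → ℝ vanishing outside the open ball B(q, r) satisfies (∫_X |f|⁴ dμ)^{1/4} ≤ C · μ(B(q, r))^{1/2}. Then (r/2) · μ(B(q, r/2))^{1/4} ≤ C · μ(B(q, r))^{1/2}. -/

import Mathlib

open Metric MeasureTheory

/-- Test-function step in the lower volume growth lemma: a Sobolev-type
inequality for 1-Lipschitz functions supported in `B(q,r)`, applied to the
truncated distance function, yields the doubling-type inequality
`(r/2) μ(B(q,r/2))^{1/4} ≤ C μ(B(q,r))^{1/2}`. -/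
theorem sobolev_test_function_step {X : Type*} [MetricSpace X] [MeasurableSpace X]
    [BorelSpace X] (μ : Measure X) (q : X) (C r : ℝ) (hC : 0 < C) (hr : 0 < r)
    (hSob : ∀ f : X → ℝ, LipschitzWith 1 f → (∀ x ∉ ball q r, f x = 0) →
      (∫⁻ x, ENNReal.ofReal (|f x| ^ 4) ∂μ) ^ ((1 : ℝ) / 4)
        ≤ ENNReal.ofReal C * (μ (ball q r)) ^ ((1 : ℝ) / 2)) :
    ENNReal.ofReal (r / 2) * (μ (ball q (r / 2))) ^ ((1 : ℝ) / 4)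
      ≤ ENNReal.ofReal C * (μ (ball q r)) ^ ((1 : ℝ) / 2) := by
  set f : X → ℝ := fun x => max (r - dist q x) 0 with hf
  have hlip : LipschitzWith 1 f := by
    have h1 : LipschitzWith 1 (fun x : X => r - dist q x) := by
      simpa using (LipschitzWith.const r).sub (LipschitzWith.dist_right q)
    simpa using h1.max_const 0
  have hvan : ∀ x ∉ ball q r, f x = 0 := by
    intro x hx
    simp only [mem_ball, not_lt] at hx
    rw [dist_comm] at hx
    simp [hf, sub_nonpos.mpr hx]
  have key := hSob f hlip hvan
  refine le_trans ?_ key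
  have hlow : ENNReal.ofReal ((r/2)^4) * μ (ball q (r/2))
      ≤ ∫⁻ x, ENNReal.ofReal (|f x| ^ 4) ∂μ := by
    rw [← lintegral_indicator_const measurableSet_ball]
    refine lintegral_mono fun x => ?_
    by_cases hx : x ∈ ball q (r/2)
    · rw [Set.indicator_of_mem hx]
      apply ENNReal.ofReal_le_ofReal
      have hd : dist q x < r / 2 := by rw [dist_comm]; exact mem_ball.mp hx
      have h2 : r / 2 ≤ f x := le_max_of_le_left (by linarith)
      have h0 : (0:ℝ) ≤ f x := le_max_right _ _
      calc (r/2)^4 ≤ (f x)^4 := by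
            apply pow_le_pow_left₀ (by positivity) h2
        _ = |f x|^4 := by rw [abs_of_nonneg h0]
    · rw [Set.indicator_of_notMem hx]; exact zero_le
  calc ENNReal.ofReal (r / 2) * (μ (ball q (r / 2))) ^ ((1 : ℝ) / 4)
      = (ENNReal.ofReal ((r/2)^4) * μ (ball q (r/2))) ^ ((1:ℝ)/4) := by
        rw [ENNReal.mul_rpow_of_nonneg _ _ (by norm_num)]
        have h4 : ((r/2:ℝ))^(4:ℕ) = (r/2) ^ (4:ℝ) := by
          rw [← Real.rpow_natCast]; norm_num
        rw [h4, ENNReal.ofReal_rpow_of_nonneg (by positivity) (by norm_num)]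
        congr 1
        rw [← Real.rpow_mul (by positivity : (0:ℝ) ≤ r/2)]
        norm_num
    _ ≤ (∫⁻ x, ENNReal.ofReal (|f x| ^ 4) ∂μ) ^ ((1 : ℝ) / 4) :=
        ENNReal.rpow_le_rpow hlow (by norm_num)
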